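/- arXiv:0909.3343 — 3 statements merged into one kernel-verified Lean document; each statement's English description precedes it below -/
import Mathlib

section
/- Coupled discrete contraction with noise: let x, y be sequences in normed spaces with ‖x(t)‖ ≤ (1 - h₁G₁/(1+‖y(t-1)‖)^{β₁} + h₁H₁)·‖x(t-1)‖ and ‖y(t)‖ ≤ (1 - h₂G₂/(1+‖x(t-1)‖)^{β₂} + h₂H₂)·‖y(t-1)‖ for 1 ≤ t ≤ T, where H₁ = G₁/(2(1+‖y(0)‖)^{β₁}), H₂ = G₂/(2(1+‖x(0)‖)^{β₂}), 0 < h₁ < 1/G₁, 0 < h₂ < 1/G₂, G₁, G₂ > 0, β₁, β₂ ≥ 0. Then for all 0 ≤ t < T: ‖x(t)‖ ≤ ‖x(0)‖·(1 - h₁H₁)^t and ‖y(t)‖ ≤ ‖y(0)‖·(1 - h₂H₂)^t. -/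
open Real

theorem stmt_7 {X V : Type*} [NormedAddCommGroup X] [NormedSpace ℝ X]
    [NormedAddCommGroup V] [NormedSpace ℝ V]
    (h₁ h₂ G₁ G₂ β₁ β₂ : ℝ) (hG₁ : 0 < G₁) (hG₂ : 0 < G₂)
    (hh₁ : 0 < h₁) (hh₁' : h₁ < 1 / G₁) (hh₂ : 0 < h₂) (hh₂' : h₂ < 1 / G₂)
    (hβ₁ : 0 ≤ β₁) (hβ₂ : 0 ≤ β₂)
    (T : ℕ) (x : ℕ → X) (y : ℕ → V)
    (H₁ H₂ : ℝ)
    (hH₁ : H₁ = G₁ / (2 * (1 + ‖y 0‖) ^ β₁))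
    (hH₂ : H₂ = G₂ / (2 * (1 + ‖x 0‖) ^ β₂))
    (hx : ∀ t : ℕ, 1 ≤ t → t ≤ T →
      ‖x t‖ ≤ (1 - h₁ * G₁ / (1 + ‖y (t - 1)‖) ^ β₁ + h₁ * H₁) * ‖x (t - 1)‖)
    (hy : ∀ t : ℕ, 1 ≤ t → t ≤ T →
      ‖y t‖ ≤ (1 - h₂ * G₂ / (1 + ‖x (t - 1)‖) ^ β₂ + h₂ * H₂) * ‖y (t - 1)‖) :
    ∀ t : ℕ, t < T →
      ‖x t‖ ≤ ‖x 0‖ * (1 - h₁ * H₁) ^ t ∧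
      ‖y t‖ ≤ ‖y 0‖ * (1 - h₂ * H₂) ^ t := by
  have hA₁ : (0:ℝ) < (1 + ‖y 0‖) ^ β₁ := Real.rpow_pos_of_pos (by positivity) _
  have hA₂ : (0:ℝ) < (1 + ‖x 0‖) ^ β₂ := Real.rpow_pos_of_pos (by positivity) _
  have hA₁1 : (1:ℝ) ≤ (1 + ‖y 0‖) ^ β₁ := by
    calc (1:ℝ) = 1 ^ β₁ := (Real.one_rpow β₁).symm
    _ ≤ (1 + ‖y 0‖) ^ β₁ :=
      Real.rpow_le_rpow zero_le_one (by linarith [norm_nonneg (y 0)]) hβ₁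
  have hA₂1 : (1:ℝ) ≤ (1 + ‖x 0‖) ^ β₂ := by
    calc (1:ℝ) = 1 ^ β₂ := (Real.one_rpow β₂).symm
    _ ≤ (1 + ‖x 0‖) ^ β₂ :=
      Real.rpow_le_rpow zero_le_one (by linarith [norm_nonneg (x 0)]) hβ₂
  have hH₁pos : 0 < H₁ := by rw [hH₁]; positivity
  have hH₂pos : 0 < H₂ := by rw [hH₂]; positivity
  have hh₁G : h₁ * G₁ < 1 := (lt_div_iff₀ hG₁).mp hh₁'
  have hh₂G : h₂ * G₂ < 1 := (lt_div_iff₀ hG₂).mp hh₂'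
  have hH₁G : H₁ ≤ G₁ / 2 := by
    rw [hH₁, div_le_div_iff₀ (by positivity) (by norm_num)]
    nlinarith
  have hH₂G : H₂ ≤ G₂ / 2 := by
    rw [hH₂, div_le_div_iff₀ (by positivity) (by norm_num)]
    nlinarith
  have hc₁ : 0 ≤ 1 - h₁ * H₁ := by nlinarith
  have hc₂ : 0 ≤ 1 - h₂ * H₂ := by nlinarith
  have hc₁' : 1 - h₁ * H₁ ≤ 1 := by nlinarith
  have hc₂' : 1 - h₂ * H₂ ≤ 1 := by nlinarith
  have h2H₁ : 2 * H₁ = G₁ / (1 + ‖y 0‖) ^ β₁ := by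
    rw [hH₁]; field_simp
  have h2H₂ : 2 * H₂ = G₂ / (1 + ‖x 0‖) ^ β₂ := by
    rw [hH₂]; field_simp
  intro t
  induction t with
  | zero => intro _; constructor <;> simp
  | succ n ih =>
    intro hlt
    have hn : n < T := Nat.lt_of_succ_lt hlt
    obtain ⟨ihx, ihy⟩ := ih hn
    have hxb : ‖x n‖ ≤ ‖x 0‖ := by
      refine le_trans ihx (mul_le_of_le_one_right (norm_nonneg _) ?_)
      exact pow_le_one₀ hc₁ hc₁'
    have hyb : ‖y n‖ ≤ ‖y 0‖ := by
      refine le_trans ihy (mul_le_of_le_one_right (norm_nonneg _) ?_)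
      exact pow_le_one₀ hc₂ hc₂'
    have hAt₁ : (0:ℝ) < (1 + ‖y n‖) ^ β₁ := Real.rpow_pos_of_pos (by positivity) _
    have hAt₂ : (0:ℝ) < (1 + ‖x n‖) ^ β₂ := Real.rpow_pos_of_pos (by positivity) _
    have hAle₁ : (1 + ‖y n‖) ^ β₁ ≤ (1 + ‖y 0‖) ^ β₁ :=
      Real.rpow_le_rpow (by positivity) (by linarith) hβ₁
    have hAle₂ : (1 + ‖x n‖) ^ β₂ ≤ (1 + ‖x 0‖) ^ β₂ :=
      Real.rpow_le_rpow (by positivity) (by linarith) hβ₂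
    have hdiv₁ : G₁ / (1 + ‖y 0‖) ^ β₁ ≤ G₁ / (1 + ‖y n‖) ^ β₁ :=
      div_le_div_of_nonneg_left hG₁.le hAt₁ hAle₁
    have hdiv₂ : G₂ / (1 + ‖x 0‖) ^ β₂ ≤ G₂ / (1 + ‖x n‖) ^ β₂ :=
      div_le_div_of_nonneg_left hG₂.le hAt₂ hAle₂
    have hfac₁ : 1 - h₁ * G₁ / (1 + ‖y n‖) ^ β₁ + h₁ * H₁ ≤ 1 - h₁ * H₁ := by
      have : 2 * H₁ ≤ G₁ / (1 + ‖y n‖) ^ β₁ := by rw [h2H₁]; exact hdiv₁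
      have h3 : h₁ * (2 * H₁) ≤ h₁ * (G₁ / (1 + ‖y n‖) ^ β₁) :=
        mul_le_mul_of_nonneg_left this hh₁.le
      have h4 : h₁ * (G₁ / (1 + ‖y n‖) ^ β₁) = h₁ * G₁ / (1 + ‖y n‖) ^ β₁ := by ring
      linarith [h4 ▸ h3]
    have hfac₂ : 1 - h₂ * G₂ / (1 + ‖x n‖) ^ β₂ + h₂ * H₂ ≤ 1 - h₂ * H₂ := by
      have : 2 * H₂ ≤ G₂ / (1 + ‖x n‖) ^ β₂ := by rw [h2H₂]; exact hdiv₂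
      have h3 : h₂ * (2 * H₂) ≤ h₂ * (G₂ / (1 + ‖x n‖) ^ β₂) :=
        mul_le_mul_of_nonneg_left this hh₂.le
      have h4 : h₂ * (G₂ / (1 + ‖x n‖) ^ β₂) = h₂ * G₂ / (1 + ‖x n‖) ^ β₂ := by ring
      linarith [h4 ▸ h3]
    have hx' := hx (n + 1) (Nat.le_add_left 1 n) hlt.le
    have hy' := hy (n + 1) (Nat.le_add_left 1 n) hlt.le
    simp only [Nat.add_sub_cancel] at hx' hy'
    constructor
    · calc ‖x (n + 1)‖ ≤ (1 - h₁ * G₁ / (1 + ‖y n‖) ^ β₁ + h₁ * H₁) * ‖x n‖ := hx'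
      _ ≤ (1 - h₁ * H₁) * ‖x n‖ :=
        mul_le_mul_of_nonneg_right hfac₁ (norm_nonneg _)
      _ ≤ (1 - h₁ * H₁) * (‖x 0‖ * (1 - h₁ * H₁) ^ n) :=
        mul_le_mul_of_nonneg_left ihx hc₁
      _ = ‖x 0‖ * (1 - h₁ * H₁) ^ (n + 1) := by ring
    · calc ‖y (n + 1)‖ ≤ (1 - h₂ * G₂ / (1 + ‖x n‖) ^ β₂ + h₂ * H₂) * ‖y n‖ := hy'
      _ ≤ (1 - h₂ * H₂) * ‖y n‖ :=
        mul_le_mul_of_nonneg_right hfac₂ (norm_nonneg _)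
      _ ≤ (1 - h₂ * H₂) * (‖y 0‖ * (1 - h₂ * H₂) ^ n) :=
        mul_le_mul_of_nonneg_left ihy hc₂
      _ = ‖y 0‖ * (1 - h₂ * H₂) ^ (n + 1) := by ring
end

section
/- Coupled continuous decay: let x : [0,T) → X and y : [0,T) → V be C¹ with d/dt ‖x(t)‖² ≤ -2(η(t) - H₁)‖x(t)‖² and d/dt ‖y(t)‖² ≤ -2(ξ(t) - H₂)‖y(t)‖², where η(t) ≥ K₂/(1+‖y(t)‖²)^{β₂}, ξ(t) ≥ K₁/(1+‖x(t)‖²)^{β₁}, H₁ = K₂/(2(1+‖y(0)‖²)^{β₂}), H₂ = K₁/(2(1+‖x(0)‖²)^{β₁}), K₁, K₂ > 0, β₁, β₂ ≥ 0. Then for all t ∈ [0,T): ‖x(t)‖² ≤ ‖x(0)‖²·e^{-2tH₁} and ‖y(t)‖² ≤ ‖y(0)‖²·e^{-2tH₂}. -/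
open Real Set

private lemma aux_diff_sq {X : Type*} [NormedAddCommGroup X] [InnerProductSpace ℝ X]
    {x : ℝ → X} (hx : Differentiable ℝ x) :
    Differentiable ℝ (fun s => ‖x s‖ ^ 2) := by
  have h : (fun s => ‖x s‖ ^ 2) = fun s => (inner ℝ (x s) (x s) : ℝ) :=
    funext fun s => (real_inner_self_eq_norm_sq (x s)).symm
  rw [h]
  exact Differentiable.inner (𝕜 := ℝ) hx hx

/-- local antitone step -/
private lemma aux_antitone {A : ℝ → ℝ} (hA : Differentiable ℝ A) {u s : ℝ} (hus : u ≤ s)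
    (hd : ∀ σ ∈ Ioo u s, deriv A σ ≤ 0) : A s ≤ A u := by
  have h := antitoneOn_of_deriv_nonpos (convex_Icc u s) hA.continuous.continuousOn
    (hA.differentiableOn) (by rwa [interior_Icc])
  exact h (left_mem_Icc.mpr hus) (right_mem_Icc.mpr hus) hus

/-- Gronwall-type lemma: if `deriv A ≤ -2 c A` on `(0, t)`, then
`A t ≤ A 0 * exp (-2 t c)`. -/
private lemma aux_gronwall {A : ℝ → ℝ} (hA : Differentiable ℝ A) {c t : ℝ} (ht : 0 ≤ t)
    (hpos : ∀ σ, 0 ≤ A σ)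
    (hd : ∀ σ ∈ Ioo (0 : ℝ) t, deriv A σ ≤ -2 * c * A σ) :
    A t ≤ A 0 * Real.exp (-2 * t * c) := by
  set g : ℝ → ℝ := fun s => A s * Real.exp (2 * c * s) with hg
  have hgd : ∀ σ : ℝ, HasDerivAt g
      (deriv A σ * Real.exp (2 * c * σ) + A σ * (Real.exp (2 * c * σ) * (2 * c * 1))) σ := by
    intro σ
    exact ((hA σ).hasDerivAt).mul (((hasDerivAt_id σ).const_mul (2 * c)).exp)
  have hgdiff : Differentiable ℝ g := fun σ => ((hgd σ).differentiableAt)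
  have hgt : g t ≤ g 0 := by
    apply aux_antitone hgdiff ht
    intro σ hσ
    rw [(hgd σ).deriv]
    have h1 := hd σ hσ
    have h2 := Real.exp_pos (2 * c * σ)
    have h3 := hpos σ
    nlinarith
  have hg0 : g 0 = A 0 := by simp [hg]
  have hepos := Real.exp_pos (2 * c * t)
  calc A t ≤ A 0 / Real.exp (2 * c * t) :=
        (le_div_iff₀ hepos).mpr (hg0 ▸ hgt)
    _ = A 0 * Real.exp (-2 * t * c) := by
        rw [div_eq_mul_inv, ← Real.exp_neg]
        congr 1
        ring

theorem stmt_12 {X V : Type*} [NormedAddCommGroup X] [InnerProductSpace ℝ X]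
    [NormedAddCommGroup V] [InnerProductSpace ℝ V]
    (T K₁ K₂ β₁ β₂ : ℝ) (hK₁ : 0 < K₁) (hK₂ : 0 < K₂)
    (hβ₁ : 0 ≤ β₁) (hβ₂ : 0 ≤ β₂)
    (x : ℝ → X) (y : ℝ → V)
    (hx : Differentiable ℝ x) (hy : Differentiable ℝ y)
    (η ξ : ℝ → ℝ) (hη : Continuous η) (hξ : Continuous ξ)
    (H₁ H₂ : ℝ)
    (hH₁ : H₁ = K₂ / (2 * (1 + ‖y 0‖ ^ 2) ^ β₂))
    (hH₂ : H₂ = K₁ / (2 * (1 + ‖x 0‖ ^ 2) ^ β₁))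
    (hηb : ∀ t ∈ Set.Ico (0 : ℝ) T, K₂ / (1 + ‖y t‖ ^ 2) ^ β₂ ≤ η t)
    (hξb : ∀ t ∈ Set.Ico (0 : ℝ) T, K₁ / (1 + ‖x t‖ ^ 2) ^ β₁ ≤ ξ t)
    (hdx : ∀ t ∈ Set.Ico (0 : ℝ) T,
      deriv (fun s => ‖x s‖ ^ 2) t ≤ -2 * (η t - H₁) * ‖x t‖ ^ 2)
    (hdy : ∀ t ∈ Set.Ico (0 : ℝ) T,
      deriv (fun s => ‖y s‖ ^ 2) t ≤ -2 * (ξ t - H₂) * ‖y t‖ ^ 2) :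
    ∀ t ∈ Set.Ico (0 : ℝ) T,
      ‖x t‖ ^ 2 ≤ ‖x 0‖ ^ 2 * Real.exp (-2 * t * H₁) ∧
      ‖y t‖ ^ 2 ≤ ‖y 0‖ ^ 2 * Real.exp (-2 * t * H₂) := by
  have hdA : Differentiable ℝ (fun s => ‖x s‖ ^ 2) := aux_diff_sq hx
  have hdB : Differentiable ℝ (fun s => ‖y s‖ ^ 2) := aux_diff_sq hy
  have hD₂ : (0:ℝ) < (1 + ‖y 0‖ ^ 2) ^ β₂ := by positivity
  have hD₁ : (0:ℝ) < (1 + ‖x 0‖ ^ 2) ^ β₁ := by positivity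
  have h2H₁eq : 2 * H₁ = K₂ / (1 + ‖y 0‖ ^ 2) ^ β₂ := by
    rw [hH₁]; field_simp
  have h2H₂eq : 2 * H₂ = K₁ / (1 + ‖x 0‖ ^ 2) ^ β₁ := by
    rw [hH₂]; field_simp
  have hH₁pos : 0 < H₁ := by rw [hH₁]; positivity
  have hH₂pos : 0 < H₂ := by rw [hH₂]; positivity
  have h2H₁ : ∀ s ∈ Set.Ico (0:ℝ) T, ‖y s‖ ^ 2 ≤ ‖y 0‖ ^ 2 → 2 * H₁ ≤ η s := by
    intro s hs hBs
    have h1 : (1 + ‖y s‖ ^ 2) ^ β₂ ≤ (1 + ‖y 0‖ ^ 2) ^ β₂ :=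
      Real.rpow_le_rpow (by positivity) (by linarith) hβ₂
    have h2 : K₂ / (1 + ‖y 0‖ ^ 2) ^ β₂ ≤ K₂ / (1 + ‖y s‖ ^ 2) ^ β₂ := by
      gcongr
    rw [h2H₁eq]
    exact h2.trans (hηb s hs)
  have h2H₂ : ∀ s ∈ Set.Ico (0:ℝ) T, ‖x s‖ ^ 2 ≤ ‖x 0‖ ^ 2 → 2 * H₂ ≤ ξ s := by
    intro s hs hAs
    have h1 : (1 + ‖x s‖ ^ 2) ^ β₁ ≤ (1 + ‖x 0‖ ^ 2) ^ β₁ :=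
      Real.rpow_le_rpow (by positivity) (by linarith) hβ₁
    have h2 : K₁ / (1 + ‖x 0‖ ^ 2) ^ β₁ ≤ K₁ / (1 + ‖x s‖ ^ 2) ^ β₁ := by
      gcongr
    rw [h2H₂eq]
    exact h2.trans (hξb s hs)
  -- Stage 1: both squared norms stay below their initial values
  have stage1 : ∀ t ∈ Set.Ico (0:ℝ) T, ‖x t‖ ^ 2 ≤ ‖x 0‖ ^ 2 ∧ ‖y t‖ ^ 2 ≤ ‖y 0‖ ^ 2 := by
    intro t ht
    set S : Set ℝ := {u | ‖x u‖ ^ 2 ≤ ‖x 0‖ ^ 2 ∧ ‖y u‖ ^ 2 ≤ ‖y 0‖ ^ 2} with hS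
    have hSclosed : IsClosed S := by
      apply IsClosed.inter
      · exact isClosed_le (hdA.continuous) continuous_const
      · exact isClosed_le (hdB.continuous) continuous_const
    have key : Set.Icc 0 t ⊆ S := by
      apply IsClosed.Icc_subset_of_forall_mem_nhdsWithin (hSclosed.inter isClosed_Icc)
        ⟨le_refl _, le_refl _⟩
      rintro u ⟨⟨hxu, hyu⟩, hu0, hut⟩
      have huT : u < T := lt_of_lt_of_le hut (le_of_lt ht.2) |>.trans_le (le_refl T)
      have hη2 : 2 * H₁ ≤ η u := h2H₁ u ⟨hu0, huT⟩ hyu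
      have hξ2 : 2 * H₂ ≤ ξ u := h2H₂ u ⟨hu0, huT⟩ hxu
      have E1 : ∀ᶠ s in nhds u, H₁ < η s :=
        hη.continuousAt.eventually (lt_mem_nhds (by linarith))
      have E2 : ∀ᶠ s in nhds u, H₂ < ξ s :=
        hξ.continuousAt.eventually (lt_mem_nhds (by linarith))
      have E3 : ∀ᶠ s in nhds u, s < T := gt_mem_nhds huT
      obtain ⟨δ, hδpos, hδ⟩ := Metric.eventually_nhds_iff.mp ((E1.and E2).and E3)
      refine Filter.mem_of_superset
        (Ioc_mem_nhdsGT (show u < u + δ/2 by linarith)) ?_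
      rintro s ⟨hus, hsle⟩
      have hdist : ∀ σ ∈ Set.Ioo u s, dist σ u < δ := by
        intro σ hσ
        rw [Real.dist_eq, abs_of_nonneg (by linarith [hσ.1])]
        have := hσ.2
        linarith
      have hsx : ‖x s‖ ^ 2 ≤ ‖x u‖ ^ 2 := by
        apply aux_antitone hdA hus.le
        intro σ hσ
        have hh := hδ (hdist σ hσ)
        have hσ0 : (0:ℝ) ≤ σ := le_of_lt (lt_of_le_of_lt hu0 hσ.1)
        have hder := hdx σ ⟨hσ0, hh.2⟩
        nlinarith [sq_nonneg ‖x σ‖, hh.1.1]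
      have hsy : ‖y s‖ ^ 2 ≤ ‖y u‖ ^ 2 := by
        apply aux_antitone hdB hus.le
        intro σ hσ
        have hh := hδ (hdist σ hσ)
        have hσ0 : (0:ℝ) ≤ σ := le_of_lt (lt_of_le_of_lt hu0 hσ.1)
        have hder := hdy σ ⟨hσ0, hh.2⟩
        nlinarith [sq_nonneg ‖y σ‖, hh.1.2]
      exact ⟨hsx.trans hxu, hsy.trans hyu⟩
    exact key ⟨ht.1, le_refl t⟩
  -- Stage 2: Gronwall
  intro t ht
  constructor
  · apply aux_gronwall hdA ht.1 (fun σ => by positivity)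
    intro σ hσ
    have hσm : σ ∈ Set.Ico (0:ℝ) T := ⟨hσ.1.le, hσ.2.trans ht.2⟩
    have hB := (stage1 σ hσm).2
    have hη2 : 2 * H₁ ≤ η σ := h2H₁ σ hσm hB
    have hder := hdx σ hσm
    nlinarith [sq_nonneg ‖x σ‖]
  · apply aux_gronwall hdB ht.1 (fun σ => by positivity)
    intro σ hσ
    have hσm : σ ∈ Set.Ico (0:ℝ) T := ⟨hσ.1.le, hσ.2.trans ht.2⟩
    have hA := (stage1 σ hσm).1
    have hξ2 : 2 * H₂ ≤ ξ σ := h2H₂ σ hσm hA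
    have hder := hdy σ hσm
    nlinarith [sq_nonneg ‖y σ‖]
end

section
/- Bootstrap lemma (case α > 1): let a, b > 0, α > 1 with (1/(aα))^{1/(α-1)}·(α-1)/α > b, and let M(z) = z - a·z^α - b with positive zeros z_l < z_r. If z : ℕ → ℝ satisfies z(0) ≤ b < z_l, M(z(t)) ≤ 0 whenever z(t) ≤ z_r, and consecutive increments satisfy z(t+1) - z(t) < M(z*) where z* = (1/(aα))^{1/(α-1)}, then z(t) ≤ z_l for all t. -/
open Real

theorem stmt_14 (a b α : ℝ) (ha : 0 < a) (hb : 0 < b) (hα : 1 < α)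
    (hgap : (1 / (a * α)) ^ (1 / (α - 1)) * ((α - 1) / α) > b)
    (M : ℝ → ℝ) (hM : ∀ z : ℝ, M z = z - a * z ^ α - b)
    (zstar : ℝ) (hzstar : zstar = (1 / (a * α)) ^ (1 / (α - 1)))
    (zl zr : ℝ) (hzl : 0 < zl) (hlr : zl < zr)
    (hMl : M zl = 0) (hMr : M zr = 0)
    (hls : zl < zstar) (hsr : zstar < zr)
    (z : ℕ → ℝ)
    (hz0 : z 0 ≤ b) (hbl : b < zl)
    (hzM : ∀ t : ℕ, z t ≤ zr → M (z t) ≤ 0)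
    (hinc : ∀ t : ℕ, z (t + 1) - z t < M zstar) :
    ∀ t : ℕ, z t ≤ zl := by
  have hzl0 : (0:ℝ) ≤ zl := hzl.le
  -- M is positive strictly between zl and zr
  have hpos : ∀ x : ℝ, zl < x → x < zr → 0 < M x := by
    intro x h1 h2
    have hd : 0 < zr - zl := by linarith
    set l := (zr - x)/(zr - zl) with hl
    set m := (x - zl)/(zr - zl) with hm
    have hl0 : 0 < l := div_pos (by linarith) hd
    have hm0 : 0 < m := div_pos (by linarith) hd
    have hsum : l + m = 1 := by
      rw [hl, hm, ← add_div, div_eq_one_iff_eq hd.ne']; ring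
    have hx : l * zl + m * zr = x := by
      rw [hl, hm, div_mul_eq_mul_div, div_mul_eq_mul_div, ← add_div, div_eq_iff hd.ne']
      ring
    have hc := (strictConvexOn_rpow hα).2 (Set.mem_Ici.mpr hzl0)
      (Set.mem_Ici.mpr (by linarith : (0:ℝ) ≤ zr)) (ne_of_lt hlr) hl0 hm0 hsum
    simp only [smul_eq_mul] at hc
    rw [hx] at hc
    have e1 := hM zl
    have e2 := hM zr
    have e3 := hM x
    nlinarith [mul_lt_mul_of_pos_left hc ha]
  -- M zstar ≤ zstar - zl
  have hrp : zl ^ α ≤ zstar ^ α :=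
    Real.rpow_le_rpow hzl0 hls.le (by linarith)
  have hMs : M zstar ≤ zstar - zl := by
    have e1 := hM zl
    have e2 := hM zstar
    nlinarith
  intro t
  induction t with
  | zero => linarith
  | succ n ih =>
    by_contra h
    push_neg at h
    have h1 := hinc n
    have h2 : z (n+1) < zstar := by linarith
    have h3 : z (n+1) < zr := lt_trans h2 hsr
    have h4 := hzM (n+1) h3.le
    have h5 := hpos _ h h3
    linarith
end
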